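/- Let X_ρ be a random variable on ℕ with P(X_ρ = x) = ρ^x ∏_{j=0}^∞ (1 - ρ^{x+1+j}), and set Y_ρ = (ln ρ / ln(1-ρ)) X_ρ. Then E(Y_ρ) → 1 and Var(Y_ρ) → 0 as ρ → 1⁻; consequently, for every ε > 0, P(|Y_ρ - 1| > ε) → 0 as ρ → 1⁻. -/

import Mathlib

open Filter Set Real
set_option linter.unusedSectionVars false

noncomputable def Lg (ρ : ℝ) (n : ℕ) : ℝ := ∑' j : ℕ, Real.log (1 - ρ ^ (n + 1 + j))
noncomputable def Qf (ρ : ℝ) (n : ℕ) : ℝ := Real.exp (Lg ρ n)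
noncomputable def gg (ρ : ℝ) (x : ℕ) : ℝ := ρ ^ x * Qf ρ x

section setup
variable {ρ : ℝ} (h0 : 0 < ρ) (h1 : ρ < 1)
include h0 h1

lemma pow_pos_lt (n j : ℕ) : 0 < ρ ^ (n + 1 + j) ∧ ρ ^ (n + 1 + j) ≤ ρ := by
  constructor
  · positivity
  · calc ρ ^ (n + 1 + j) ≤ ρ ^ 1 := pow_le_pow_of_le_one h0.le h1.le (by omega)
    _ = ρ := pow_one ρ

lemma factor_pos (n j : ℕ) : 0 < 1 - ρ ^ (n + 1 + j) := by
  have := (pow_pos_lt h0 h1 n j).2; linarith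

lemma neg_log_le (n j : ℕ) : -Real.log (1 - ρ ^ (n + 1 + j)) ≤ ρ ^ (n + 1 + j) / (1 - ρ) := by
  have hp := (pow_pos_lt h0 h1 n j).1
  have hle := (pow_pos_lt h0 h1 n j).2
  have hf := factor_pos h0 h1 n j
  have h2 : Real.log (1 - ρ ^ (n + 1 + j))⁻¹ ≤ (1 - ρ ^ (n + 1 + j))⁻¹ - 1 :=
    Real.log_le_sub_one_of_pos (by positivity)
  rw [Real.log_inv] at h2
  have h3 : (1 - ρ ^ (n + 1 + j))⁻¹ - 1 = ρ ^ (n + 1 + j) / (1 - ρ ^ (n + 1 + j)) := by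
    field_simp
    ring
  rw [h3] at h2
  refine h2.trans (div_le_div_of_nonneg_left hp.le (by linarith) (by linarith))

lemma log_nonpos' (n j : ℕ) : Real.log (1 - ρ ^ (n + 1 + j)) ≤ 0 := by
  have := (pow_pos_lt h0 h1 n j).1
  exact Real.log_nonpos (by linarith [factor_pos h0 h1 n j]) (by linarith)

lemma summable_geom_shift (n : ℕ) : Summable fun j : ℕ => ρ ^ (n + 1 + j) := by
  have : (fun j : ℕ => ρ ^ (n + 1 + j)) = fun j : ℕ => ρ ^ (n + 1) * ρ ^ j := by
    funext j; rw [pow_add]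
  rw [this]
  exact (summable_geometric_of_lt_one h0.le h1).mul_left _

lemma tsum_geom_shift (n : ℕ) : ∑' j : ℕ, ρ ^ (n + 1 + j) = ρ ^ (n + 1) / (1 - ρ) := by
  have : (fun j : ℕ => ρ ^ (n + 1 + j)) = fun j : ℕ => ρ ^ (n + 1) * ρ ^ j := by
    funext j; rw [pow_add]
  rw [this, tsum_mul_left, tsum_geometric_of_lt_one h0.le h1, div_eq_mul_inv]

lemma summable_log (n : ℕ) : Summable fun j : ℕ => Real.log (1 - ρ ^ (n + 1 + j)) := by
  rw [← summable_neg_iff]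
  apply Summable.of_nonneg_of_le (fun j => by simpa using log_nonpos' h0 h1 n j)
    (fun j => neg_log_le h0 h1 n j)
  exact (summable_geom_shift h0 h1 n).div_const _

lemma Lg_le (n : ℕ) : Lg ρ n ≤ -(ρ ^ (n + 1) / (1 - ρ)) := by
  have h := Summable.tsum_le_tsum (f := fun j : ℕ => Real.log (1 - ρ ^ (n + 1 + j)))
    (g := fun j : ℕ => -(ρ ^ (n + 1 + j)))
    (fun j => by
      show Real.log (1 - ρ ^ (n + 1 + j)) ≤ -(ρ ^ (n + 1 + j))
      have := Real.log_le_sub_one_of_pos (factor_pos h0 h1 n j)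
      linarith)
    (summable_log h0 h1 n) ((summable_geom_shift h0 h1 n).neg)
  rw [tsum_neg, tsum_geom_shift h0 h1 n] at h
  exact h

lemma le_Lg (n : ℕ) : -(ρ ^ (n + 1) / (1 - ρ) ^ 2) ≤ Lg ρ n := by
  have h := Summable.tsum_le_tsum (f := fun j : ℕ => -(ρ ^ (n + 1 + j) / (1 - ρ)))
    (g := fun j : ℕ => Real.log (1 - ρ ^ (n + 1 + j)))
    (fun j => by
      show -(ρ ^ (n + 1 + j) / (1 - ρ)) ≤ Real.log (1 - ρ ^ (n + 1 + j))
      have h2 := neg_log_le h0 h1 n j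
      linarith)
    (((summable_geom_shift h0 h1 n).div_const _).neg) (summable_log h0 h1 n)
  rw [tsum_neg] at h
  have : (fun j : ℕ => ρ ^ (n + 1 + j) / (1 - ρ)) = fun j : ℕ => ρ ^ (n + 1 + j) * (1 - ρ)⁻¹ := by
    funext j; rw [div_eq_mul_inv]
  rw [this, tsum_mul_right, tsum_geom_shift h0 h1 n] at h
  calc -(ρ ^ (n + 1) / (1 - ρ) ^ 2) = -(ρ ^ (n + 1) / (1 - ρ) * (1 - ρ)⁻¹) := by
        rw [sq, ← div_div, div_eq_mul_inv]
  _ ≤ Lg ρ n := h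

lemma Lg_nonpos (n : ℕ) : Lg ρ n ≤ 0 := by
  have := Lg_le h0 h1 n
  have hp : (0:ℝ) < ρ ^ (n+1) := by positivity
  have : ρ ^ (n+1) / (1-ρ) > 0 := by apply div_pos hp; linarith
  linarith [Lg_le h0 h1 n]

omit h0 h1 in
lemma Qf_pos (n : ℕ) : 0 < Qf ρ n := Real.exp_pos _

lemma Qf_le_one (n : ℕ) : Qf ρ n ≤ 1 := Real.exp_le_one_iff.2 (Lg_nonpos h0 h1 n)

lemma tprod_eq_Qf (n : ℕ) : ∏' j : ℕ, (1 - ρ ^ (n + 1 + j)) = Qf ρ n := by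
  have h := (summable_log h0 h1 n).hasSum.rexp
  have h2 : (Real.exp ∘ fun j : ℕ => Real.log (1 - ρ ^ (n + 1 + j)))
      = fun j : ℕ => (1 - ρ ^ (n + 1 + j)) := by
    funext j
    exact Real.exp_log (factor_pos h0 h1 n j)
  rw [h2] at h
  exact h.tprod_eq

lemma Lg_rec (n : ℕ) : Lg ρ n = Real.log (1 - ρ ^ (n + 1)) + Lg ρ (n + 1) := by
  have h := Summable.tsum_eq_zero_add (summable_log h0 h1 n)
  simp only [Nat.add_zero] at h
  rw [Lg, h]
  congr 1
  rw [Lg]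
  apply tsum_congr
  intro j
  rw [show n + 1 + (j + 1) = n + 1 + 1 + j by omega]

lemma Qf_rec (n : ℕ) : Qf ρ n = (1 - ρ ^ (n + 1)) * Qf ρ (n + 1) := by
  rw [Qf, Lg_rec h0 h1 n, Real.exp_add, Real.exp_log]
  · rfl
  · have := factor_pos h0 h1 n 0; simpa using this

lemma sum_gg (n : ℕ) : ∑ x ∈ Finset.range (n + 1), gg ρ x = Qf ρ n := by
  induction n with
  | zero => simp [gg]
  | succ n ih =>
    rw [Finset.sum_range_succ, ih, gg, Qf_rec h0 h1 n]
    ring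

lemma gg_nonneg (x : ℕ) : 0 ≤ gg ρ x := by
  unfold gg
  have h2 := Qf_pos (ρ := ρ) x
  positivity

lemma gg_le (x : ℕ) : gg ρ x ≤ ρ ^ x := by
  unfold gg
  nlinarith [Qf_le_one (ρ := ρ) h0 h1 x, Qf_pos (ρ := ρ) x, pow_pos h0 x]

lemma summable_gg : Summable (gg ρ) :=
  Summable.of_nonneg_of_le (gg_nonneg h0 h1) (gg_le h0 h1) (summable_geometric_of_lt_one h0.le h1)

lemma summable_x_gg : Summable fun x : ℕ => (x:ℝ) * gg ρ x := by
  apply Summable.of_nonneg_of_le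
    (fun x => mul_nonneg (by positivity) (gg_nonneg h0 h1 x))
    (fun x => mul_le_mul_of_nonneg_left (gg_le h0 h1 x) (by positivity))
  have := summable_pow_mul_geometric_of_norm_lt_one (R := ℝ) 1
    (r := ρ) (by rw [Real.norm_eq_abs, abs_of_pos h0]; exact h1)
  simpa using this

lemma summable_x2_gg : Summable fun x : ℕ => (x:ℝ)^2 * gg ρ x := by
  apply Summable.of_nonneg_of_le
    (fun x => mul_nonneg (by positivity) (gg_nonneg h0 h1 x))
    (fun x => mul_le_mul_of_nonneg_left (gg_le h0 h1 x) (by positivity))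
  exact summable_pow_mul_geometric_of_norm_lt_one (R := ℝ) 2
    (r := ρ) (by rw [Real.norm_eq_abs, abs_of_pos h0]; exact h1)

lemma tendsto_Qf : Tendsto (fun n => Qf ρ n) atTop (nhds 1) := by
  have hL : Tendsto (fun n => Lg ρ n) atTop (nhds 0) := by
    have hpow : Tendsto (fun n : ℕ => ρ ^ (n+1)) atTop (nhds 0) :=
      (tendsto_add_atTop_iff_nat 1).2 (tendsto_pow_atTop_nhds_zero_of_lt_one h0.le h1)
    have hlow : Tendsto (fun n : ℕ => -(ρ ^ (n + 1) / (1 - ρ) ^ 2)) atTop (nhds 0) := by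
      simpa using ((hpow.div_const ((1-ρ)^2)).neg)
    have hup : Tendsto (fun n : ℕ => -(ρ ^ (n + 1) / (1 - ρ))) atTop (nhds 0) := by
      simpa using ((hpow.div_const (1-ρ)).neg)
    exact tendsto_of_tendsto_of_tendsto_of_le_of_le hlow hup (le_Lg h0 h1) (Lg_le h0 h1)
  have := (Real.continuous_exp.tendsto 0).comp hL
  simpa [Qf, Real.exp_zero, Function.comp_def] using this

lemma hasSum_gg : HasSum (gg ρ) 1 := by
  rw [hasSum_iff_tendsto_nat_of_nonneg (gg_nonneg h0 h1)]
  rw [← tendsto_add_atTop_iff_nat 1]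
  have : (fun n : ℕ => ∑ i ∈ Finset.range (n + 1), gg ρ i) = fun n => Qf ρ n := by
    funext n; exact sum_gg h0 h1 n
  rw [this]
  exact tendsto_Qf h0 h1

lemma tsum_gg : ∑' x, gg ρ x = 1 := (hasSum_gg h0 h1).tsum_eq

lemma sum_range_gg_le (n : ℕ) : ∑ x ∈ Finset.range n, gg ρ x ≤ Real.exp (-(ρ ^ n / (1 - ρ))) := by
  cases n with
  | zero => simp [Real.exp_pos _ |>.le]
  | succ n =>
    rw [sum_gg h0 h1 n]
    exact Real.exp_le_exp.2 (Lg_le h0 h1 n)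

lemma tail_gg (n : ℕ) : ∑' k : ℕ, gg ρ (k + n) = 1 - ∑ x ∈ Finset.range n, gg ρ x := by
  have := Summable.sum_add_tsum_nat_add n (summable_gg h0 h1)
  rw [tsum_gg h0 h1] at this
  linarith

end setup

noncomputable def cc (ρ : ℝ) : ℝ := Real.log ρ / Real.log (1 - ρ)

section cfacts
variable {ρ : ℝ} (hρ : 1/2 < ρ) (h1 : ρ < 1)
include hρ h1

lemma hρ0 : 0 < ρ := by linarith
lemma hu0 : 0 < 1 - ρ := by linarith
lemma hu2 : 1 - ρ < 1/2 := by linarith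

lemma log_rho_neg : Real.log ρ < 0 := Real.log_neg (by linarith) h1

lemma log_u_lt : Real.log (1 - ρ) ≤ -Real.log 2 := by
  have h := Real.log_le_log (by linarith : (0:ℝ) < 1 - ρ) (le_of_lt (hu2 hρ h1))
  rwa [show (1:ℝ)/2 = 2⁻¹ by norm_num, Real.log_inv] at h

lemma log_u_neg : Real.log (1 - ρ) < 0 := by
  have := log_u_lt hρ h1
  have h2 := Real.log_pos (by norm_num : (1:ℝ) < 2)
  linarith

lemma cc_pos : 0 < cc ρ :=
  div_pos_of_neg_of_neg (log_rho_neg hρ h1) (log_u_neg hρ h1)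

lemma neg_log_rho_le : -Real.log ρ ≤ 2 * (1 - ρ) := by
  have h := Real.log_le_sub_one_of_pos (show (0:ℝ) < ρ⁻¹ by positivity)
  rw [Real.log_inv] at h
  have h2 : ρ⁻¹ - 1 = (1 - ρ)/ρ := by field_simp
  rw [h2] at h
  have h3 : (1 - ρ)/ρ ≤ 2 * (1 - ρ) := by
    rw [div_le_iff₀ (by linarith : (0:ℝ) < ρ)]
    nlinarith
  linarith

lemma cc_le : cc ρ ≤ 3 * (1 - ρ) := by
  have hl2 : (0.6931471803 : ℝ) < Real.log 2 := Real.log_two_gt_d9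
  have hun : Real.log (1 - ρ) ≤ -Real.log 2 := log_u_lt hρ h1
  have hc : cc ρ = (-Real.log ρ) / (-Real.log (1 - ρ)) := by
    rw [cc, neg_div_neg_eq]
  rw [hc, div_le_iff₀ (by linarith [log_u_neg hρ h1] : (0:ℝ) < -Real.log (1 - ρ))]
  have h2 := neg_log_rho_le hρ h1
  nlinarith [hu0 hρ h1]

lemma pow_le_rpow_of_le {s : ℝ} {n : ℕ} (hs : 0 ≤ s) (hn : s / cc ρ ≤ n) :
    ρ ^ n ≤ (1 - ρ) ^ s := by
  have h0 := hρ0 hρ h1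
  have hlρ := log_rho_neg hρ h1
  have hcp := cc_pos hρ h1
  have key : (n : ℝ) * Real.log ρ ≤ s * Real.log (1 - ρ) := by
    have h2 : (n:ℝ) * Real.log ρ ≤ (s / cc ρ) * Real.log ρ :=
      mul_le_mul_of_nonpos_right hn hlρ.le
    have h3 : (s / cc ρ) * Real.log ρ = s * Real.log (1 - ρ) := by
      rw [cc]; field_simp [hlρ.ne]
    linarith
  calc ρ ^ n = Real.exp ((n : ℝ) * Real.log ρ) := by
        rw [← Real.log_pow, Real.exp_log (by positivity)]
  _ ≤ Real.exp (s * Real.log (1 - ρ)) := Real.exp_le_exp.2 key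
  _ = (1 - ρ) ^ s := by rw [Real.rpow_def_of_pos (hu0 hρ h1), mul_comm]

lemma rpow_le_pow_of_le {s : ℝ} {n : ℕ} (hn : (n : ℝ) ≤ s / cc ρ) :
    (1 - ρ) ^ s ≤ ρ ^ n := by
  have h0 := hρ0 hρ h1
  have hlρ := log_rho_neg hρ h1
  have hcp := cc_pos hρ h1
  have key : s * Real.log (1 - ρ) ≤ (n : ℝ) * Real.log ρ := by
    have h2 : (s / cc ρ) * Real.log ρ ≤ (n:ℝ) * Real.log ρ :=
      mul_le_mul_of_nonpos_right hn hlρ.le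
    have h3 : (s / cc ρ) * Real.log ρ = s * Real.log (1 - ρ) := by
      rw [cc]; field_simp [hlρ.ne]
    linarith
  calc (1 - ρ) ^ s = Real.exp (s * Real.log (1 - ρ)) := by
        rw [Real.rpow_def_of_pos (hu0 hρ h1), mul_comm]
  _ ≤ Real.exp ((n : ℝ) * Real.log ρ) := Real.exp_le_exp.2 key
  _ = ρ ^ n := by
        rw [← Real.log_pow, Real.exp_log (by positivity)]

end cfacts

lemma tsum_sq_geom_le {ρ : ℝ} (h0 : 0 ≤ ρ) (h1 : ρ < 1) :
    ∑' k : ℕ, (k:ℝ)^2 * ρ^k ≤ 3 / (1 - ρ)^3 := by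
  have hn : ‖ρ‖ < 1 := by rw [Real.norm_eq_abs, abs_of_nonneg h0]; exact h1
  have hS2 : Summable fun k : ℕ => (k:ℝ)^2 * ρ^k :=
    summable_pow_mul_geometric_of_norm_lt_one 2 hn
  have hS1 : Summable fun k : ℕ => (k:ℝ) * ρ^k := by
    have := summable_pow_mul_geometric_of_norm_lt_one (R := ℝ) 1 hn
    simpa using this
  have hS0 : Summable fun k : ℕ => ρ^k := summable_geometric_of_lt_one h0 h1
  set S := ∑' k : ℕ, (k:ℝ)^2 * ρ^k with hSdef
  have h := Summable.tsum_eq_zero_add hS2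
  simp only [Nat.cast_zero] at h
  have hre : (fun k : ℕ => ((k:ℝ)+1)^2 * ρ^(k+1))
      = fun k : ℕ => ρ * ((k:ℝ)^2 * ρ^k) + (2*ρ * ((k:ℝ) * ρ^k) + ρ * ρ^k) := by
    funext k; rw [pow_succ]; ring
  have hz : ((0:ℝ))^2 * ρ^0 = 0 := by norm_num
  have h2 : S = ρ * S + (2*ρ * (ρ/(1-ρ)^2) + ρ * (1-ρ)⁻¹) := by
    calc S = ∑' k : ℕ, ((k:ℝ)+1)^2 * ρ^(k+1) := by
            rw [hSdef, h, hz, zero_add]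
            exact tsum_congr fun k => by push_cast; ring
    _ = ∑' k : ℕ, (ρ * ((k:ℝ)^2 * ρ^k) + (2*ρ * ((k:ℝ) * ρ^k) + ρ * ρ^k)) := by
            rw [hre]
    _ = ρ * S + (2*ρ * (ρ/(1-ρ)^2) + ρ * (1-ρ)⁻¹) := by
            rw [Summable.tsum_add (hS2.mul_left ρ) ((hS1.mul_left (2*ρ)).add (hS0.mul_left ρ)),
              Summable.tsum_add (hS1.mul_left (2*ρ)) (hS0.mul_left ρ),
              tsum_mul_left, tsum_mul_left, tsum_mul_left,
              tsum_coe_mul_geometric_of_norm_lt_one hn, tsum_geometric_of_lt_one h0 h1]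
  have hu : (0:ℝ) < 1 - ρ := by linarith
  have h3 : S * (1 - ρ) = 2*ρ * (ρ/(1-ρ)^2) + ρ * (1-ρ)⁻¹ := by nlinarith [h2]
  have h4 : S = (2*ρ * (ρ/(1-ρ)^2) + ρ * (1-ρ)⁻¹) / (1 - ρ) := by
    rw [← h3]; field_simp
  rw [h4, div_le_div_iff₀ (by positivity) (by positivity)]
  have e1 : (2*ρ * (ρ/(1-ρ)^2) + ρ * (1-ρ)⁻¹) * (1-ρ)^3
      = (2*ρ^2 + ρ*(1-ρ)) * (1 - ρ) := by
    field_simp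
  rw [e1]
  nlinarith [sq_nonneg ρ, sq_nonneg (1-ρ)]

set_option maxHeartbeats 1600000 in
lemma E1_bounds {ρ δ : ℝ} (hρ : 1/2 < ρ) (h1 : ρ < 1) (hδ0 : 0 < δ) (hδ1 : δ ≤ 1)
    (hA : 3 * (1 - ρ) ≤ δ) (hB : (1 - ρ) ^ (δ:ℝ) ≤ δ)
    (hC : Real.exp (-(1 - ρ) ^ (-δ:ℝ)) ≤ δ) :
    |cc ρ * (∑' x : ℕ, (x:ℝ) * gg ρ x) - 1| ≤ 10 * δ := by
  have h0 : 0 < ρ := by linarith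
  have hu : 0 < 1 - ρ := by linarith
  have hu1 : 1 - ρ ≤ 1 := by linarith
  have hcp := cc_pos hρ h1
  have hcu := cc_le hρ h1
  have hcA : cc ρ ≤ δ := by linarith
  set u : ℝ := 1 - ρ with hudef
  set t : ℝ := (1 - ρ) ^ (δ:ℝ) with htdef
  have ht0 : 0 ≤ t := Real.rpow_nonneg hu.le _
  set c := cc ρ with hc
  set E1 := ∑' x : ℕ, (x:ℝ) * gg ρ x with hE1
  have hsum1 := summable_x_gg h0 h1
  have hsum0 := summable_gg h0 h1
  have hS0ρ : Summable fun k : ℕ => ρ ^ k := summable_geometric_of_lt_one h0.le h1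
  have hS1ρ : Summable fun k : ℕ => (k:ℝ) * ρ ^ k := by
    have := summable_pow_mul_geometric_of_norm_lt_one (R := ℝ) 1
      (r := ρ) (by rw [Real.norm_eq_abs, abs_of_pos h0]; exact h1)
    simpa using this
  -- ===== upper bound =====
  set N := ⌈(1+δ)/c⌉₊ with hN
  have hNle : (1+δ)/c ≤ (N:ℝ) := Nat.le_ceil _
  have hcN_lb : 1 + δ ≤ c * N := by
    rw [div_le_iff₀ hcp] at hNle; linarith
  have hcN_ub : c * N ≤ 1 + δ + c := by
    have h2 : (N:ℝ) < (1+δ)/c + 1 := Nat.ceil_lt_add_one (by positivity)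
    have h3 : c * ((1+δ)/c + 1) = (1+δ) + c := by field_simp
    have h4 := mul_lt_mul_of_pos_left h2 hcp
    rw [h3] at h4
    linarith
  have hcN3 : c * N ≤ 3 := by linarith
  have hcN0 : 0 ≤ c * N := by positivity
  have hρN : ρ ^ N ≤ u * t := by
    have h5 := pow_le_rpow_of_le hρ h1 (s := 1+δ) (by positivity) hNle
    rwa [Real.rpow_add hu, Real.rpow_one] at h5
  have hρNn : (0:ℝ) ≤ ρ ^ N := by positivity
  have hsplit := Summable.sum_add_tsum_nat_add N hsum1
  have ht1 : ∑ x ∈ Finset.range N, (x:ℝ) * gg ρ x ≤ N := by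
    calc ∑ x ∈ Finset.range N, (x:ℝ) * gg ρ x
        ≤ ∑ x ∈ Finset.range N, (N:ℝ) * gg ρ x := by
          apply Finset.sum_le_sum
          intro i hi
          exact mul_le_mul_of_nonneg_right
            (by exact_mod_cast (Finset.mem_range.1 hi).le) (gg_nonneg h0 h1 i)
      _ = (N:ℝ) * ∑ x ∈ Finset.range N, gg ρ x := by rw [Finset.mul_sum]
      _ ≤ (N:ℝ) * 1 := by
          apply mul_le_mul_of_nonneg_left _ (Nat.cast_nonneg N)
          rw [← tsum_gg h0 h1]
          exact Summable.sum_le_tsum _ (fun i _ => gg_nonneg h0 h1 i) hsum0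
      _ = N := mul_one _
  have hsumL : Summable fun k : ℕ => ((k+N:ℕ):ℝ) * gg ρ (k+N) := by
    have := (summable_nat_add_iff (f := fun x : ℕ => (x:ℝ) * gg ρ x) N).2 hsum1
    exact this
  have hsumR : Summable fun k : ℕ => ρ^N * ((k:ℝ) * ρ^k) + (N:ℝ) * ρ^N * ρ^k :=
    (hS1ρ.mul_left _).add (hS0ρ.mul_left _)
  have ht2 : ∑' k : ℕ, ((k+N:ℕ):ℝ) * gg ρ (k+N)
      ≤ ρ^N * (ρ/(1-ρ)^2) + (N:ℝ) * ρ^N * (1-ρ)⁻¹ := by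
    have hstep : ∀ k : ℕ, ((k+N:ℕ):ℝ) * gg ρ (k+N)
        ≤ ρ^N * ((k:ℝ) * ρ^k) + (N:ℝ) * ρ^N * ρ^k := by
      intro k
      have hg := gg_le h0 h1 (k+N)
      calc ((k+N:ℕ):ℝ) * gg ρ (k+N) ≤ ((k+N:ℕ):ℝ) * ρ^(k+N) :=
            mul_le_mul_of_nonneg_left hg (by positivity)
        _ = ρ^N * ((k:ℝ) * ρ^k) + (N:ℝ) * ρ^N * ρ^k := by
            push_cast; rw [pow_add]; ring
    calc ∑' k : ℕ, ((k+N:ℕ):ℝ) * gg ρ (k+N)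
        ≤ ∑' k : ℕ, (ρ^N * ((k:ℝ) * ρ^k) + (N:ℝ) * ρ^N * ρ^k) :=
          Summable.tsum_le_tsum hstep hsumL hsumR
      _ = ρ^N * (ρ/(1-ρ)^2) + (N:ℝ) * ρ^N * (1-ρ)⁻¹ := by
          rw [Summable.tsum_add (hS1ρ.mul_left _) (hS0ρ.mul_left _), tsum_mul_left, tsum_mul_left,
            tsum_coe_mul_geometric_of_norm_lt_one
              (by rw [Real.norm_eq_abs, abs_of_pos h0]; exact h1),
            tsum_geometric_of_lt_one h0.le h1]
  have hEle : E1 ≤ (N:ℝ) + (ρ^N * (ρ/(1-ρ)^2) + (N:ℝ) * ρ^N * (1-ρ)⁻¹) := by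
    rw [hE1, ← hsplit]
    exact add_le_add ht1 ht2
  have p2 : c * (ρ^N * (ρ/(1-ρ)^2)) ≤ 3 * δ := by
    have hnum : c * ρ^N * ρ ≤ 3*u * (u*t) := by
      have k1 : c * ρ^N ≤ 3*u * (u*t) := mul_le_mul hcu hρN hρNn (by positivity)
      have k2 : c * ρ^N * ρ ≤ c * ρ^N * 1 :=
        mul_le_mul_of_nonneg_left h1.le (by positivity)
      rw [mul_one] at k2
      linarith
    have e1 : c * (ρ^N * (ρ/(1-ρ)^2)) = (c * ρ^N * ρ) / u^2 := by
      rw [hudef]; ring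
    have e2 : (3*u*(u*t)) / u^2 = 3*t := by
      field_simp
    rw [e1]
    calc (c * ρ^N * ρ) / u^2 ≤ (3*u*(u*t)) / u^2 :=
          div_le_div_of_nonneg_right hnum (by positivity) |>.trans_eq rfl
      _ = 3*t := e2
      _ ≤ 3*δ := by linarith
  have p3 : (c * N) * (ρ^N * (1-ρ)⁻¹) ≤ 3 * δ := by
    have hnum : (c*N) * ρ^N ≤ 3 * (u*t) := by
      nlinarith [mul_le_mul hcN3 hρN hρNn (by norm_num : (0:ℝ) ≤ 3)]
    have e1 : (c * N) * (ρ^N * (1-ρ)⁻¹) = ((c*N) * ρ^N) / u := by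
      rw [hudef]; ring
    have e2 : (3*(u*t))/u = 3*t := by field_simp
    rw [e1]
    calc ((c*N) * ρ^N) / u ≤ (3*(u*t))/u := div_le_div_of_nonneg_right hnum hu.le
      _ = 3*t := e2
      _ ≤ 3*δ := by linarith
  have hup : c * E1 ≤ 1 + 8*δ := by
    have h6 := mul_le_mul_of_nonneg_left hEle hcp.le
    have e3 : c * ((N:ℝ) + (ρ^N * (ρ/(1-ρ)^2) + (N:ℝ) * ρ^N * (1-ρ)⁻¹))
        = c * N + c * (ρ^N * (ρ/(1-ρ)^2)) + (c * N) * (ρ^N * (1-ρ)⁻¹) := by ring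
    rw [e3] at h6
    linarith
  -- ===== lower bound =====
  set M := ⌊(1-δ)/c⌋₊ with hM
  have hMle : (M:ℝ) ≤ (1-δ)/c := Nat.floor_le (div_nonneg (by linarith) hcp.le)
  have hcM_ub : c * M ≤ 1 - δ := by
    rw [le_div_iff₀ hcp] at hMle; linarith
  have hcM_lb : 1 - δ - c ≤ c * M := by
    have h7 : (1-δ)/c < (M:ℝ) + 1 := Nat.lt_floor_add_one _
    have h8 := mul_lt_mul_of_pos_left h7 hcp
    rw [mul_div_cancel₀ _ hcp.ne'] at h8
    have h9 : c * ((M:ℝ)+1) = c * M + c := by ring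
    linarith
  have hρM : u ^ ((1:ℝ)-δ) ≤ ρ^M := rpow_le_pow_of_le hρ h1 hMle
  have hsum_range : ∑ x ∈ Finset.range M, gg ρ x ≤ δ := by
    have e4 : u ^ ((1:ℝ)-δ) / u = u ^ (-δ:ℝ) := by
      rw [show (1:ℝ)-δ = 1 + -δ by ring, Real.rpow_add hu, Real.rpow_one]
      field_simp
    calc ∑ x ∈ Finset.range M, gg ρ x ≤ Real.exp (-(ρ^M / (1-ρ))) :=
          sum_range_gg_le h0 h1 M
      _ ≤ Real.exp (-(u ^ ((1:ℝ)-δ) / u)) := by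
          apply Real.exp_le_exp.2
          have h9 : u ^ ((1:ℝ)-δ) / u ≤ ρ^M / u := by
            apply div_le_div_of_nonneg_right hρM hu.le
          linarith
      _ = Real.exp (-(u ^ (-δ:ℝ))) := by rw [e4]
      _ ≤ δ := hC
  have htail : 1 - δ ≤ ∑' k : ℕ, gg ρ (k+M) := by
    rw [tail_gg h0 h1 M]; linarith
  have hE_lb : (M:ℝ) * (1-δ) ≤ E1 := by
    have hsplit2 := Summable.sum_add_tsum_nat_add M hsum1
    have h10 : (0:ℝ) ≤ ∑ x ∈ Finset.range M, (x:ℝ) * gg ρ x :=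
      Finset.sum_nonneg fun i _ => mul_nonneg (by positivity) (gg_nonneg h0 h1 i)
    have hsumgM : Summable fun k : ℕ => gg ρ (k+M) :=
      (summable_nat_add_iff (f := gg ρ) M).2 hsum0
    have hsumLM : Summable fun k : ℕ => ((k+M:ℕ):ℝ) * gg ρ (k+M) :=
      (summable_nat_add_iff (f := fun x : ℕ => (x:ℝ) * gg ρ x) M).2 hsum1
    have h11 : (M:ℝ) * (1-δ) ≤ ∑' k : ℕ, ((k+M:ℕ):ℝ) * gg ρ (k+M) := by
      calc (M:ℝ) * (1-δ) ≤ (M:ℝ) * ∑' k : ℕ, gg ρ (k+M) :=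
            mul_le_mul_of_nonneg_left htail (Nat.cast_nonneg M)
        _ = ∑' k : ℕ, (M:ℝ) * gg ρ (k+M) := tsum_mul_left.symm
        _ ≤ ∑' k : ℕ, ((k+M:ℕ):ℝ) * gg ρ (k+M) := by
            apply Summable.tsum_le_tsum _ (hsumgM.mul_left _) hsumLM
            intro k
            exact mul_le_mul_of_nonneg_right (by exact_mod_cast Nat.le_add_left M k)
              (gg_nonneg h0 h1 (k+M))
    linarith [hsplit2]
  have hlow : 1 - 3*δ ≤ c * E1 := by
    have h12 := mul_le_mul_of_nonneg_left hE_lb hcp.le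
    have e5 : c * ((M:ℝ) * (1-δ)) = (c*M) * (1-δ) := by ring
    rw [e5] at h12
    have h13 : 1 - 2*δ ≤ c*M := by linarith
    have h14 := mul_le_mul_of_nonneg_right h13 (by linarith : (0:ℝ) ≤ 1-δ)
    have h15 : (1-2*δ)*(1-δ) = 1 - 3*δ + 2*δ^2 := by ring
    rw [h15] at h14
    linarith [sq_nonneg δ]
  rw [abs_le]
  constructor <;> [linarith; linarith]

set_option maxHeartbeats 1600000 in
lemma E2_bounds {ρ δ : ℝ} (hρ : 1/2 < ρ) (h1 : ρ < 1) (hδ0 : 0 < δ) (hδ1 : δ ≤ 1)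
    (hA : 3 * (1 - ρ) ≤ δ) (hB : (1 - ρ) ^ (δ:ℝ) ≤ δ)
    (hC : Real.exp (-(1 - ρ) ^ (-δ:ℝ)) ≤ δ) :
    |(cc ρ)^2 * (∑' x : ℕ, (x:ℝ)^2 * gg ρ x) - 1| ≤ 100 * δ := by
  have h0 : 0 < ρ := by linarith
  have hu : 0 < 1 - ρ := by linarith
  have hu1 : 1 - ρ ≤ 1 := by linarith
  have hcp := cc_pos hρ h1
  have hcu := cc_le hρ h1
  have hcA : cc ρ ≤ δ := by linarith
  set u : ℝ := 1 - ρ with hudef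
  set t : ℝ := (1 - ρ) ^ (δ:ℝ) with htdef
  have ht0 : 0 ≤ t := Real.rpow_nonneg hu.le _
  set c := cc ρ with hc
  set E2 := ∑' x : ℕ, (x:ℝ)^2 * gg ρ x with hE2
  have hsum2 := summable_x2_gg h0 h1
  have hsum0 := summable_gg h0 h1
  have hS0ρ : Summable fun k : ℕ => ρ ^ k := summable_geometric_of_lt_one h0.le h1
  have hS2ρ : Summable fun k : ℕ => (k:ℝ)^2 * ρ ^ k :=
    summable_pow_mul_geometric_of_norm_lt_one 2
      (by rw [Real.norm_eq_abs, abs_of_pos h0]; exact h1)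
  have hSbound := tsum_sq_geom_le h0.le h1
  have hE2nn : 0 ≤ E2 :=
    tsum_nonneg fun x => mul_nonneg (by positivity) (gg_nonneg h0 h1 x)
  -- ===== upper bound =====
  set N := ⌈(1+δ)/c⌉₊ with hN
  have hNle : (1+δ)/c ≤ (N:ℝ) := Nat.le_ceil _
  have hcN_lb : 1 + δ ≤ c * N := by
    rw [div_le_iff₀ hcp] at hNle; linarith
  have hcN_ub : c * N ≤ 1 + δ + c := by
    have h2 : (N:ℝ) < (1+δ)/c + 1 := Nat.ceil_lt_add_one (by positivity)
    have h3 : c * ((1+δ)/c + 1) = (1+δ) + c := by field_simp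
    have h4 := mul_lt_mul_of_pos_left h2 hcp
    rw [h3] at h4
    linarith
  have hcN3 : c * N ≤ 3 := by linarith
  have hcN0 : 0 ≤ c * N := by positivity
  have hρN : ρ ^ N ≤ u * t := by
    have h5 := pow_le_rpow_of_le hρ h1 (s := 1+δ) (by positivity) hNle
    rwa [Real.rpow_add hu, Real.rpow_one] at h5
  have hρNn : (0:ℝ) ≤ ρ ^ N := by positivity
  have hsplit := Summable.sum_add_tsum_nat_add N hsum2
  have ht1 : ∑ x ∈ Finset.range N, (x:ℝ)^2 * gg ρ x ≤ (N:ℝ)^2 := by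
    calc ∑ x ∈ Finset.range N, (x:ℝ)^2 * gg ρ x
        ≤ ∑ x ∈ Finset.range N, (N:ℝ)^2 * gg ρ x := by
          apply Finset.sum_le_sum
          intro i hi
          apply mul_le_mul_of_nonneg_right _ (gg_nonneg h0 h1 i)
          have : (i:ℝ) ≤ N := by exact_mod_cast (Finset.mem_range.1 hi).le
          exact pow_le_pow_left₀ (Nat.cast_nonneg i) this 2
      _ = (N:ℝ)^2 * ∑ x ∈ Finset.range N, gg ρ x := by rw [Finset.mul_sum]
      _ ≤ (N:ℝ)^2 * 1 := by
          apply mul_le_mul_of_nonneg_left _ (by positivity)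
          rw [← tsum_gg h0 h1]
          exact Summable.sum_le_tsum _ (fun i _ => gg_nonneg h0 h1 i) hsum0
      _ = (N:ℝ)^2 := mul_one _
  have hsumL : Summable fun k : ℕ => ((k+N:ℕ):ℝ)^2 * gg ρ (k+N) :=
    (summable_nat_add_iff (f := fun x : ℕ => (x:ℝ)^2 * gg ρ x) N).2 hsum2
  have hsumR : Summable fun k : ℕ => ρ^N * (2 * ((k:ℝ)^2 * ρ^k)) + (2 * (N:ℝ)^2 * ρ^N) * ρ^k :=
    ((hS2ρ.mul_left _).mul_left _).add (hS0ρ.mul_left _)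
  have ht2 : ∑' k : ℕ, ((k+N:ℕ):ℝ)^2 * gg ρ (k+N)
      ≤ 6 * ρ^N / u^3 + 2 * (N:ℝ)^2 * ρ^N * u⁻¹ := by
    have hstep : ∀ k : ℕ, ((k+N:ℕ):ℝ)^2 * gg ρ (k+N)
        ≤ ρ^N * (2 * ((k:ℝ)^2 * ρ^k)) + (2 * (N:ℝ)^2 * ρ^N) * ρ^k := by
      intro k
      have hg := gg_le h0 h1 (k+N)
      calc ((k+N:ℕ):ℝ)^2 * gg ρ (k+N) ≤ ((k+N:ℕ):ℝ)^2 * ρ^(k+N) :=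
            mul_le_mul_of_nonneg_left hg (by positivity)
        _ ≤ ρ^N * (2 * ((k:ℝ)^2 * ρ^k)) + (2 * (N:ℝ)^2 * ρ^N) * ρ^k := by
            push_cast
            rw [pow_add]
            have hkn : ((k:ℝ) + N)^2 ≤ 2*(k:ℝ)^2 + 2*(N:ℝ)^2 := by
              have hs := sq_nonneg ((k:ℝ) - N)
              have e : ((k:ℝ) + N)^2 = 2*(k:ℝ)^2 + 2*(N:ℝ)^2 - ((k:ℝ) - N)^2 := by ring
              rw [e]
              linarith
            have hpk : (0:ℝ) ≤ ρ^k := by positivity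
            have hm := mul_le_mul_of_nonneg_right hkn (mul_nonneg hpk hρNn)
            have e : (2*(k:ℝ)^2 + 2*(N:ℝ)^2) * (ρ^k * ρ^N)
                = ρ^N * (2 * ((k:ℝ)^2 * ρ^k)) + (2 * (N:ℝ)^2 * ρ^N) * ρ^k := by ring
            calc ((k:ℝ) + N)^2 * (ρ^k * ρ^N) ≤ (2*(k:ℝ)^2 + 2*(N:ℝ)^2) * (ρ^k * ρ^N) := hm
              _ = _ := e
    calc ∑' k : ℕ, ((k+N:ℕ):ℝ)^2 * gg ρ (k+N)
        ≤ ∑' k : ℕ, (ρ^N * (2 * ((k:ℝ)^2 * ρ^k)) + (2 * (N:ℝ)^2 * ρ^N) * ρ^k) :=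
          Summable.tsum_le_tsum hstep hsumL hsumR
      _ = ρ^N * (2 * ∑' k : ℕ, (k:ℝ)^2 * ρ^k) + (2 * (N:ℝ)^2 * ρ^N) * (1-ρ)⁻¹ := by
          rw [Summable.tsum_add ((hS2ρ.mul_left _).mul_left _) (hS0ρ.mul_left _),
            tsum_mul_left, tsum_mul_left, tsum_mul_left,
            tsum_geometric_of_lt_one h0.le h1]
      _ ≤ 6 * ρ^N / u^3 + 2 * (N:ℝ)^2 * ρ^N * u⁻¹ := by
          have k1 : ρ^N * (2 * ∑' k : ℕ, (k:ℝ)^2 * ρ^k) ≤ ρ^N * (2 * (3 / u^3)) := by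
            apply mul_le_mul_of_nonneg_left _ hρNn
            linarith [hSbound]
          have k2 : ρ^N * (2 * (3 / u^3)) = 6 * ρ^N / u^3 := by ring
          have k3 : (2 * (N:ℝ)^2 * ρ^N) * (1-ρ)⁻¹ = 2 * (N:ℝ)^2 * ρ^N * u⁻¹ := by
            rw [hudef]
          linarith [k1, k2.le, k3.le]
  have hEle : E2 ≤ (N:ℝ)^2 + (6 * ρ^N / u^3 + 2 * (N:ℝ)^2 * ρ^N * u⁻¹) := by
    rw [hE2, ← hsplit]
    exact add_le_add ht1 ht2
  have hc2 : c^2 ≤ 9 * u^2 := by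
    have := pow_le_pow_left₀ hcp.le hcu 2
    calc c^2 ≤ (3*u)^2 := this
      _ = 9 * u^2 := by ring
  have q1 : c^2 * (6 * ρ^N / u^3) ≤ 54 * δ := by
    have hnum : c^2 * (6 * ρ^N) ≤ 9*u^2 * (6 * (u*t)) := by
      have := mul_le_mul hc2 (by linarith : 6 * ρ^N ≤ 6 * (u*t)) (by positivity) (by positivity)
      linarith
    have e1 : c^2 * (6 * ρ^N / u^3) = (c^2 * (6 * ρ^N)) / u^3 := by ring
    have e2 : (9*u^2 * (6*(u*t))) / u^3 = 54*t := by field_simp; ring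
    rw [e1]
    calc (c^2 * (6 * ρ^N)) / u^3 ≤ (9*u^2 * (6*(u*t))) / u^3 :=
          div_le_div_of_nonneg_right hnum (by positivity)
      _ = 54*t := e2
      _ ≤ 54*δ := by linarith
  have q2 : (c*N)^2 * (2 * ρ^N * u⁻¹) ≤ 18 * δ := by
    have hcN2 : (c*N)^2 ≤ 9 := by
      have := pow_le_pow_left₀ hcN0 hcN3 2
      calc (c*N)^2 ≤ 3^2 := this
        _ = 9 := by norm_num
    have hnum : (c*N)^2 * (2 * ρ^N) ≤ 9 * (2 * (u*t)) := by
      have := mul_le_mul hcN2 (by linarith : 2 * ρ^N ≤ 2 * (u*t)) (by positivity) (by norm_num)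
      linarith
    have e1 : (c*N)^2 * (2 * ρ^N * u⁻¹) = ((c*N)^2 * (2 * ρ^N)) / u := by ring
    have e2 : (9 * (2*(u*t))) / u = 18*t := by field_simp; ring
    rw [e1]
    calc ((c*N)^2 * (2 * ρ^N)) / u ≤ (9 * (2*(u*t))) / u :=
          div_le_div_of_nonneg_right hnum hu.le
      _ = 18*t := e2
      _ ≤ 18*δ := by linarith
  have hup : c^2 * E2 ≤ 1 + 80*δ := by
    have h6 := mul_le_mul_of_nonneg_left hEle (by positivity : (0:ℝ) ≤ c^2)
    have e3 : c^2 * ((N:ℝ)^2 + (6 * ρ^N / u^3 + 2 * (N:ℝ)^2 * ρ^N * u⁻¹))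
        = (c*N)^2 + c^2 * (6 * ρ^N / u^3) + (c*N)^2 * (2 * ρ^N * u⁻¹) := by ring
    rw [e3] at h6
    have h7 : (c*N)^2 ≤ 1 + 8*δ := by
      have k1 : c * N ≤ 1 + 2*δ := by linarith
      have k2 := pow_le_pow_left₀ hcN0 k1 2
      have k3 : (1+2*δ)^2 = 1 + 4*δ + 4*δ^2 := by ring
      have k4 : δ^2 ≤ δ := by
        have := mul_le_mul_of_nonneg_right hδ1 hδ0.le
        calc δ^2 = δ*δ := sq δ
          _ ≤ 1*δ := this
          _ = δ := one_mul δ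
      linarith
    linarith
  -- ===== lower bound =====
  set M := ⌊(1-δ)/c⌋₊ with hM
  have hMle : (M:ℝ) ≤ (1-δ)/c := Nat.floor_le (div_nonneg (by linarith) hcp.le)
  have hcM_ub : c * M ≤ 1 - δ := by
    rw [le_div_iff₀ hcp] at hMle; linarith
  have hcM_lb : 1 - δ - c ≤ c * M := by
    have h7 : (1-δ)/c < (M:ℝ) + 1 := Nat.lt_floor_add_one _
    have h8 := mul_lt_mul_of_pos_left h7 hcp
    rw [mul_div_cancel₀ _ hcp.ne'] at h8
    have h9 : c * ((M:ℝ)+1) = c * M + c := by ring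
    linarith
  have hρM : u ^ ((1:ℝ)-δ) ≤ ρ^M := rpow_le_pow_of_le hρ h1 hMle
  have hsum_range : ∑ x ∈ Finset.range M, gg ρ x ≤ δ := by
    have e4 : u ^ ((1:ℝ)-δ) / u = u ^ (-δ:ℝ) := by
      rw [show (1:ℝ)-δ = 1 + -δ by ring, Real.rpow_add hu, Real.rpow_one]
      field_simp
    calc ∑ x ∈ Finset.range M, gg ρ x ≤ Real.exp (-(ρ^M / (1-ρ))) :=
          sum_range_gg_le h0 h1 M
      _ ≤ Real.exp (-(u ^ ((1:ℝ)-δ) / u)) := by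
          apply Real.exp_le_exp.2
          have h9 : u ^ ((1:ℝ)-δ) / u ≤ ρ^M / u := by
            apply div_le_div_of_nonneg_right hρM hu.le
          linarith
      _ = Real.exp (-(u ^ (-δ:ℝ))) := by rw [e4]
      _ ≤ δ := hC
  have htail : 1 - δ ≤ ∑' k : ℕ, gg ρ (k+M) := by
    rw [tail_gg h0 h1 M]; linarith
  have hE_lb : (M:ℝ)^2 * (1-δ) ≤ E2 := by
    have hsplit2 := Summable.sum_add_tsum_nat_add M hsum2
    have h10 : (0:ℝ) ≤ ∑ x ∈ Finset.range M, (x:ℝ)^2 * gg ρ x :=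
      Finset.sum_nonneg fun i _ => mul_nonneg (by positivity) (gg_nonneg h0 h1 i)
    have hsumgM : Summable fun k : ℕ => gg ρ (k+M) :=
      (summable_nat_add_iff (f := gg ρ) M).2 hsum0
    have hsumLM : Summable fun k : ℕ => ((k+M:ℕ):ℝ)^2 * gg ρ (k+M) :=
      (summable_nat_add_iff (f := fun x : ℕ => (x:ℝ)^2 * gg ρ x) M).2 hsum2
    have h11 : (M:ℝ)^2 * (1-δ) ≤ ∑' k : ℕ, ((k+M:ℕ):ℝ)^2 * gg ρ (k+M) := by
      calc (M:ℝ)^2 * (1-δ) ≤ (M:ℝ)^2 * ∑' k : ℕ, gg ρ (k+M) :=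
            mul_le_mul_of_nonneg_left htail (by positivity)
        _ = ∑' k : ℕ, (M:ℝ)^2 * gg ρ (k+M) := tsum_mul_left.symm
        _ ≤ ∑' k : ℕ, ((k+M:ℕ):ℝ)^2 * gg ρ (k+M) := by
            apply Summable.tsum_le_tsum _ (hsumgM.mul_left _) hsumLM
            intro k
            apply mul_le_mul_of_nonneg_right _ (gg_nonneg h0 h1 (k+M))
            have : (M:ℝ) ≤ ((k+M:ℕ):ℝ) := by exact_mod_cast Nat.le_add_left M k
            exact pow_le_pow_left₀ (Nat.cast_nonneg M) this 2
    linarith [hsplit2]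
  have hlow : 1 - 100*δ ≤ c^2 * E2 := by
    rcases le_or_gt (1 - 2*δ) 0 with hcase | hcase
    · have : (0:ℝ) ≤ c^2 * E2 := by positivity
      linarith
    · have h12 := mul_le_mul_of_nonneg_left hE_lb (by positivity : (0:ℝ) ≤ c^2)
      have e5 : c^2 * ((M:ℝ)^2 * (1-δ)) = (c*M)^2 * (1-δ) := by ring
      rw [e5] at h12
      have h13 : 1 - 2*δ ≤ c*M := by linarith
      have h14 : (1-2*δ)^2 ≤ (c*M)^2 := pow_le_pow_left₀ (by linarith) h13 2
      have h15 := mul_le_mul_of_nonneg_right h14 (by linarith : (0:ℝ) ≤ 1-δ)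
      have e6 : (1-2*δ)^2*(1-δ) = 1 - 5*δ + 8*δ^2 - 4*δ^3 := by ring
      have e7 : (0:ℝ) ≤ 8*δ^2 - 4*δ^3 := by
        have : δ^3 ≤ δ^2 := pow_le_pow_of_le_one hδ0.le hδ1 (by omega)
        have : (0:ℝ) ≤ δ^2 := sq_nonneg δ
        linarith [pow_le_pow_of_le_one hδ0.le hδ1 (show 2 ≤ 3 by omega)]
      linarith
  rw [abs_le]
  constructor <;> [linarith; linarith]

lemma eventually_conds {δ : ℝ} (hδ0 : 0 < δ) :
    ∀ᶠ ρ in nhdsWithin (1:ℝ) (Set.Iio 1),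
      1/2 < ρ ∧ ρ < 1 ∧ 3 * (1 - ρ) ≤ δ ∧ (1 - ρ) ^ (δ:ℝ) ≤ δ ∧
        Real.exp (-(1 - ρ) ^ (-δ:ℝ)) ≤ δ := by
  have hK : (0:ℝ) < max 1 (-Real.log δ) := lt_of_lt_of_le one_pos (le_max_left _ _)
  set K := max 1 (-Real.log δ) with hKdef
  have hd1 : (0:ℝ) < δ ^ ((1:ℝ)/δ) := Real.rpow_pos_of_pos hδ0 _
  have hd2 : (0:ℝ) < (1/K) ^ ((1:ℝ)/δ) := Real.rpow_pos_of_pos (by positivity) _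
  set a : ℝ := max (1/2) (max (1 - δ/3) (max (1 - δ ^ ((1:ℝ)/δ)) (1 - (1/K) ^ ((1:ℝ)/δ))))
    with hadef
  have ha : a < 1 := by
    apply max_lt (by norm_num)
    apply max_lt (by linarith)
    exact max_lt (by linarith) (by linarith)
  have h1 : ∀ᶠ ρ in nhdsWithin (1:ℝ) (Set.Iio 1), a < ρ :=
    (eventually_gt_nhds ha).filter_mono nhdsWithin_le_nhds
  have h2 : ∀ᶠ ρ in nhdsWithin (1:ℝ) (Set.Iio 1), ρ ∈ Set.Iio (1:ℝ) :=
    eventually_mem_nhdsWithin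
  filter_upwards [h1, h2] with ρ hρa hρ1
  have hρ1' : ρ < 1 := hρ1
  have hu0 : 0 < 1 - ρ := by linarith
  have h12 : 1/2 < ρ := lt_of_le_of_lt (le_max_left _ _) hρa
  have hb1 : 1 - δ/3 < ρ :=
    lt_of_le_of_lt ((le_max_left _ _).trans (le_max_right _ _)) hρa
  have hb2 : 1 - δ ^ ((1:ℝ)/δ) < ρ :=
    lt_of_le_of_lt (((le_max_left _ _).trans (le_max_right _ _)).trans (le_max_right _ _)) hρa
  have hb3 : 1 - (1/K) ^ ((1:ℝ)/δ) < ρ :=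
    lt_of_le_of_lt (((le_max_right _ _).trans (le_max_right _ _)).trans (le_max_right _ _)) hρa
  refine ⟨h12, hρ1', by linarith, ?_, ?_⟩
  · -- (1-ρ)^δ ≤ δ
    have hle : (1 - ρ) ≤ δ ^ ((1:ℝ)/δ) := by linarith
    have := Real.rpow_le_rpow hu0.le hle hδ0.le
    calc (1-ρ) ^ (δ:ℝ) ≤ (δ ^ ((1:ℝ)/δ)) ^ (δ:ℝ) := this
      _ = δ ^ (((1:ℝ)/δ) * δ) := (Real.rpow_mul hδ0.le _ _).symm
      _ = δ := by rw [one_div_mul_cancel hδ0.ne', Real.rpow_one]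
  · -- exp bound
    have hle : (1 - ρ) ≤ (1/K) ^ ((1:ℝ)/δ) := by linarith
    have h3 : (1-ρ) ^ (δ:ℝ) ≤ 1/K := by
      have := Real.rpow_le_rpow hu0.le hle hδ0.le
      calc (1-ρ) ^ (δ:ℝ) ≤ ((1/K) ^ ((1:ℝ)/δ)) ^ (δ:ℝ) := this
        _ = (1/K) ^ (((1:ℝ)/δ) * δ) := (Real.rpow_mul (by positivity) _ _).symm
        _ = 1/K := by rw [one_div_mul_cancel hδ0.ne', Real.rpow_one]
    have h4 : K ≤ (1-ρ) ^ (-δ:ℝ) := by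
      rw [Real.rpow_neg hu0.le]
      have hp : 0 < (1-ρ) ^ (δ:ℝ) := Real.rpow_pos_of_pos hu0 _
      exact (le_inv_comm₀ hK hp).2 (by rwa [← one_div])
    have h5 : -Real.log δ ≤ K := le_max_right _ _
    have h6 : -(1-ρ) ^ (-δ:ℝ) ≤ Real.log δ := by linarith
    calc Real.exp (-(1-ρ) ^ (-δ:ℝ)) ≤ Real.exp (Real.log δ) := Real.exp_le_exp.2 h6
      _ = δ := Real.exp_log hδ0

lemma T1 : Tendsto (fun ρ => cc ρ * ∑' x : ℕ, (x:ℝ) * gg ρ x)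
    (nhdsWithin (1:ℝ) (Set.Iio 1)) (nhds 1) := by
  rw [Metric.tendsto_nhds]
  intro ε hε
  set δ := min (ε/20) 1 with hδdef
  have hδ0 : 0 < δ := lt_min (by linarith) one_pos
  have hδ1 : δ ≤ 1 := min_le_right _ _
  have hδε : 10 * δ < ε := by
    have : δ ≤ ε/20 := min_le_left _ _
    linarith
  filter_upwards [eventually_conds hδ0] with ρ hconds
  obtain ⟨c1, c2, c3, c4, c5⟩ := hconds
  rw [Real.dist_eq]
  have h := E1_bounds c1 c2 hδ0 hδ1 c3 c4 c5
  calc |cc ρ * ∑' x : ℕ, (x:ℝ) * gg ρ x - 1| ≤ 10 * δ := h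
    _ < ε := hδε

lemma T2 : Tendsto (fun ρ => (cc ρ)^2 * ∑' x : ℕ, (x:ℝ)^2 * gg ρ x)
    (nhdsWithin (1:ℝ) (Set.Iio 1)) (nhds 1) := by
  rw [Metric.tendsto_nhds]
  intro ε hε
  set δ := min (ε/200) 1 with hδdef
  have hδ0 : 0 < δ := lt_min (by linarith) one_pos
  have hδ1 : δ ≤ 1 := min_le_right _ _
  have hδε : 100 * δ < ε := by
    have : δ ≤ ε/200 := min_le_left _ _
    linarith
  filter_upwards [eventually_conds hδ0] with ρ hconds
  obtain ⟨c1, c2, c3, c4, c5⟩ := hconds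
  rw [Real.dist_eq]
  have h := E2_bounds c1 c2 hδ0 hδ1 c3 c4 c5
  calc |(cc ρ)^2 * ∑' x : ℕ, (x:ℝ)^2 * gg ρ x - 1| ≤ 100 * δ := h
    _ < ε := hδε

theorem scaled_convergence_in_probability
    (f : ℝ → ℕ → ℝ)
    (hf : ∀ ρ x, f ρ x = ρ ^ x * ∏' j : ℕ, (1 - ρ ^ (x + 1 + j)))
    (c : ℝ → ℝ) (hc : ∀ ρ, c ρ = Real.log ρ / Real.log (1 - ρ)) :
    Tendsto (fun ρ => ∑' x : ℕ, (c ρ * x) * f ρ x)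
      (nhdsWithin 1 (Set.Iio 1)) (nhds 1) ∧
    Tendsto (fun ρ =>
        (∑' x : ℕ, (c ρ * x) ^ 2 * f ρ x) - (∑' x : ℕ, (c ρ * x) * f ρ x) ^ 2)
      (nhdsWithin 1 (Set.Iio 1)) (nhds 0) ∧
    ∀ ε : ℝ, 0 < ε →
      Tendsto (fun ρ => ∑' x : ℕ, if ε < |c ρ * x - 1| then f ρ x else 0)
        (nhdsWithin 1 (Set.Iio 1)) (nhds 0) := by
  have hcc : c = cc := by
    funext ρ; rw [hc, cc]
  have hev : ∀ᶠ ρ in nhdsWithin (1:ℝ) (Set.Iio 1), 1/2 < ρ ∧ ρ < 1 := by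
    filter_upwards [eventually_conds one_pos] with ρ h
    exact ⟨h.1, h.2.1⟩
  have hfgg : ∀ {ρ : ℝ}, 1/2 < ρ → ρ < 1 → f ρ = gg ρ := by
    intro ρ hρ h1
    have h0 : (0:ℝ) < ρ := by linarith
    funext x
    rw [hf, gg, tprod_eq_Qf h0 h1]
  have key1 : ∀ᶠ ρ in nhdsWithin (1:ℝ) (Set.Iio 1),
      ∑' x : ℕ, (c ρ * x) * f ρ x = cc ρ * ∑' x : ℕ, (x:ℝ) * gg ρ x := by
    filter_upwards [hev] with ρ ⟨hρ, h1⟩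
    rw [hfgg hρ h1, hcc, ← tsum_mul_left]
    exact tsum_congr fun x => by ring
  have key2 : ∀ᶠ ρ in nhdsWithin (1:ℝ) (Set.Iio 1),
      ∑' x : ℕ, (c ρ * x)^2 * f ρ x = (cc ρ)^2 * ∑' x : ℕ, (x:ℝ)^2 * gg ρ x := by
    filter_upwards [hev] with ρ ⟨hρ, h1⟩
    rw [hfgg hρ h1, hcc, ← tsum_mul_left]
    exact tsum_congr fun x => by ring
  have goal1 : Tendsto (fun ρ => ∑' x : ℕ, (c ρ * x) * f ρ x)
      (nhdsWithin 1 (Set.Iio 1)) (nhds 1) := by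
    apply T1.congr'
    filter_upwards [key1] with ρ h
    exact h.symm
  refine ⟨goal1, ?_, ?_⟩
  · -- variance
    have h := T2.sub (T1.mul T1)
    norm_num at h
    apply h.congr'
    filter_upwards [key1, key2] with ρ h1 h2
    rw [h1, h2]
    ring
  · -- Chebyshev
    intro ε hε
    have hU : Tendsto (fun ρ => (ε^2)⁻¹ * ((cc ρ)^2 * (∑' x : ℕ, (x:ℝ)^2 * gg ρ x)
        - 2 * (cc ρ * ∑' x : ℕ, (x:ℝ) * gg ρ x) + 1))
        (nhdsWithin (1:ℝ) (Set.Iio 1)) (nhds ((ε^2)⁻¹ * (1 - 2*1 + 1))) := by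
      exact (((T2.sub (T1.const_mul 2)).add_const 1).const_mul _)
    have h0' : ((ε:ℝ)^2)⁻¹ * (1 - 2*1 + 1) = 0 := by norm_num
    rw [h0'] at hU
    apply tendsto_of_tendsto_of_tendsto_of_le_of_le' tendsto_const_nhds hU
    · -- 0 ≤ P
      filter_upwards [hev] with ρ ⟨hρ, h1⟩
      have h0 : (0:ℝ) < ρ := by linarith
      apply tsum_nonneg
      intro x
      by_cases hx : ε < |c ρ * x - 1|
      · rw [if_pos hx, hfgg hρ h1]
        exact gg_nonneg h0 h1 x
      · rw [if_neg hx]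
    · -- P ≤ upper
      filter_upwards [hev] with ρ ⟨hρ, h1⟩
      have h0 : (0:ℝ) < ρ := by linarith
      rw [hfgg hρ h1, hcc]
      set cρ := cc ρ
      have hsum0 := summable_gg h0 h1
      have hsum1 := summable_x_gg h0 h1
      have hsum2 := summable_x2_gg h0 h1
      have hsumQ : Summable (fun x : ℕ => (cρ * x - 1)^2 * gg ρ x) := by
        have : Summable (fun x : ℕ => (cρ^2 * ((x:ℝ)^2 * gg ρ x)
            - 2*cρ * ((x:ℝ) * gg ρ x)) + gg ρ x) :=
          ((hsum2.mul_left _).sub (hsum1.mul_left _)).add hsum0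
        exact this.congr fun x => by ring
      have hsumL : Summable (fun x : ℕ => if ε < |cρ * x - 1| then gg ρ x else 0) := by
        apply Summable.of_nonneg_of_le _ _ hsum0
        · intro x
          by_cases hx : ε < |cρ * x - 1|
          · rw [if_pos hx]; exact gg_nonneg h0 h1 x
          · rw [if_neg hx]
        · intro x
          by_cases hx : ε < |cρ * x - 1|
          · rw [if_pos hx]
          · rw [if_neg hx]; exact gg_nonneg h0 h1 x
      have hpt : ∀ x : ℕ, (if ε < |cρ * x - 1| then gg ρ x else 0)
          ≤ (ε^2)⁻¹ * ((cρ * x - 1)^2 * gg ρ x) := by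
        intro x
        by_cases hx : ε < |cρ * x - 1|
        · rw [if_pos hx]
          have h2 : ε^2 < (cρ * x - 1)^2 := by
            have := pow_lt_pow_left₀ hx hε.le (n := 2) (by norm_num)
            rwa [sq_abs] at this
          have h3 : (1:ℝ) ≤ (ε^2)⁻¹ * (cρ * x - 1)^2 := by
            rw [← div_eq_inv_mul, le_div_iff₀ (by positivity)]
            linarith
          have h4 := mul_le_mul_of_nonneg_right h3 (gg_nonneg h0 h1 x)
          rw [one_mul] at h4
          calc gg ρ x ≤ (ε^2)⁻¹ * (cρ * x - 1)^2 * gg ρ x := h4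
            _ = (ε^2)⁻¹ * ((cρ * x - 1)^2 * gg ρ x) := by ring
        · rw [if_neg hx]
          exact mul_nonneg (by positivity) (mul_nonneg (sq_nonneg _) (gg_nonneg h0 h1 x))
      calc ∑' x : ℕ, (if ε < |cρ * x - 1| then gg ρ x else 0)
          ≤ ∑' x : ℕ, (ε^2)⁻¹ * ((cρ * x - 1)^2 * gg ρ x) :=
            Summable.tsum_le_tsum hpt hsumL (hsumQ.mul_left _)
        _ = (ε^2)⁻¹ * ∑' x : ℕ, (cρ * x - 1)^2 * gg ρ x := tsum_mul_left
        _ = (ε^2)⁻¹ * (cρ^2 * (∑' x : ℕ, (x:ℝ)^2 * gg ρ x)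
              - 2 * (cρ * ∑' x : ℕ, (x:ℝ) * gg ρ x) + 1) := by
            congr 1
            have e1 : ∑' x : ℕ, (cρ * x - 1)^2 * gg ρ x
                = ∑' x : ℕ, ((cρ^2 * ((x:ℝ)^2 * gg ρ x)
                    - 2*cρ * ((x:ℝ) * gg ρ x)) + gg ρ x) :=
              tsum_congr fun x => by ring
            rw [e1, Summable.tsum_add (((hsum2.mul_left _).sub (hsum1.mul_left _))) hsum0,
              Summable.tsum_sub (hsum2.mul_left _) (hsum1.mul_left _),
              tsum_mul_left, tsum_mul_left, tsum_gg h0 h1]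
            ring
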